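/- Let h ∈ ℂ with h ∉ 2πi·ℚ and q := exp(h). Let A be the quotient of the free ℂ-algebra on two generators x₁, x₂ by the two-sided ideal generated by x₂²x₁ − [2]x₂x₁x₂ + x₁x₂² + x₁ and x₁²x₂ − [2]x₁x₂x₁ + x₂x₁² + x₂ (so A ≅ U_q^{tw}(so₃) with x₁ = I₂₁, x₂ = I₃₂). Set y := x₁x₂ − q·x₂x₁ in A. Then the element C_q := −x₁² − q^{−1}y² − q²x₂² − (q − q^{−1})x₁x₂y is central in A; equivalently, C_q commutes with both x₁ and x₂. -/

import Mathlib

/-- the q-number `[b] := (q^b − q^{−b})/(q − q^{−1})` where `q = exp h`. -/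
noncomputable def qnum (h b : ℂ) : ℂ :=
  (Complex.exp (h * b) - Complex.exp (-(h * b))) / (Complex.exp h - Complex.exp (-h))

open FreeAlgebra in
/-- The defining relations of `U_q^tw(so₃)` on the free algebra on two generators
`x₁ = ι 0 (= I₂₁)` and `x₂ = ι 1 (= I₃₂)`. -/
inductive so3Rel (h : ℂ) : FreeAlgebra ℂ (Fin 2) → FreeAlgebra ℂ (Fin 2) → Prop
  | rel1 : so3Rel h
      (ι ℂ 1 * ι ℂ 1 * ι ℂ 0 - qnum h 2 • (ι ℂ 1 * ι ℂ 0 * ι ℂ 1) + ι ℂ 0 * (ι ℂ 1 * ι ℂ 1))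
      (-ι ℂ 0)
  | rel2 : so3Rel h
      (ι ℂ 0 * ι ℂ 0 * ι ℂ 1 - qnum h 2 • (ι ℂ 0 * ι ℂ 1 * ι ℂ 0) + ι ℂ 1 * (ι ℂ 0 * ι ℂ 0))
      (-ι ℂ 1)

theorem stmt_11 (h : ℂ) (hh : ∀ r : ℚ, h ≠ 2 * Real.pi * Complex.I * r) :
    ∀ (x₁ x₂ y Cq : RingQuot (so3Rel h)),
      x₁ = RingQuot.mkAlgHom ℂ (so3Rel h) (FreeAlgebra.ι ℂ 0) →
      x₂ = RingQuot.mkAlgHom ℂ (so3Rel h) (FreeAlgebra.ι ℂ 1) →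
      y = x₁ * x₂ - Complex.exp h • (x₂ * x₁) →
      Cq = -(x₁ * x₁) - (Complex.exp h)⁻¹ • (y * y) - (Complex.exp h) ^ 2 • (x₂ * x₂)
            - (Complex.exp h - (Complex.exp h)⁻¹) • (x₁ * x₂ * y) →
      ∀ a : RingQuot (so3Rel h), Cq * a = a * Cq := by
  intro x₁ x₂ y Cq hx₁ hx₂ hy hC
  obtain ⟨q, hqdef⟩ : ∃ q' : ℂ, Complex.exp h = q' := ⟨_, rfl⟩
  rw [hqdef] at hy hC
  have hq0 : q ≠ 0 := hqdef ▸ Complex.exp_ne_zero h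
  have hq2 : q * q ≠ 1 := by
    intro hcon
    have h1 : Complex.exp (h + h) = 1 := by rw [Complex.exp_add, hqdef]; exact hcon
    rw [Complex.exp_eq_one_iff] at h1
    obtain ⟨n, hn⟩ := h1
    apply hh ((n : ℚ) / 2)
    have hcast : (((n : ℚ) / 2 : ℚ) : ℂ) = (n : ℂ) / 2 := by push_cast; ring
    rw [hcast]
    linear_combination hn / 2
  have hq21 : q * q - 1 ≠ 0 := sub_ne_zero.mpr hq2
  have hqq : q - q⁻¹ ≠ 0 := by
    apply sub_ne_zero.mpr
    intro e
    exact hq2 (by nth_rewrite 2 [e]; exact mul_inv_cancel₀ hq0)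
  have hqnum : qnum h 2 = q + q⁻¹ := by
    have e2h : Complex.exp (h * 2) = q * q := by rw [mul_two, Complex.exp_add, hqdef]
    rw [qnum, e2h, Complex.exp_neg, Complex.exp_neg, e2h, hqdef, div_eq_iff hqq]
    field_simp
    ring
  -- the two defining relations, in the quotient
  have hrel1 := RingQuot.mkAlgHom_rel ℂ (so3Rel.rel1 (h := h))
  simp only [map_sub, map_add, map_mul, map_smul, map_neg] at hrel1
  rw [← hx₁, ← hx₂, hqnum] at hrel1
  have hrel2 := RingQuot.mkAlgHom_rel ℂ (so3Rel.rel2 (h := h))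
  simp only [map_sub, map_add, map_mul, map_smul, map_neg] at hrel2
  rw [← hx₁, ← hx₂, hqnum] at hrel2
  -- rewriting rules toward the PBW normal form  x₁^i y^j x₂^k
  have r1 : x₂ * x₁ = q⁻¹ • (x₁ * x₂) - q⁻¹ • y := by
    rw [hy]
    match_scalars <;> field_simp <;> ring
  have r1' : ∀ z, x₂ * (x₁ * z) = q⁻¹ • (x₁ * (x₂ * z)) - q⁻¹ • (y * z) := by
    intro z
    rw [← mul_assoc, r1, sub_mul, smul_mul_assoc, smul_mul_assoc, mul_assoc]
  have r2 : x₂ * y = q • (y * x₂) + q • x₁ := by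
    have key : x₂ * y - (q • (y * x₂) + q • x₁)
        = (-q) • ((x₂ * x₂ * x₁ - (q + q⁻¹) • (x₂ * x₁ * x₂) + x₁ * (x₂ * x₂)) - (-x₁)) := by
      rw [hy]
      simp only [mul_add, add_mul, mul_sub, sub_mul, mul_smul_comm, smul_mul_assoc, mul_assoc]
      match_scalars <;> field_simp <;> ring_nf
    rw [hrel1, sub_self, smul_zero] at key
    exact sub_eq_zero.mp key
  have r2' : ∀ z, x₂ * (y * z) = q • (y * (x₂ * z)) + q • (x₁ * z) := by
    intro z
    rw [← mul_assoc, r2, add_mul, smul_mul_assoc, smul_mul_assoc, mul_assoc]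
  have r3 : y * x₁ = q • (x₁ * y) + q • x₂ := by
    have key : y * x₁ - (q • (x₁ * y) + q • x₂)
        = (-q) • ((x₁ * x₁ * x₂ - (q + q⁻¹) • (x₁ * x₂ * x₁) + x₂ * (x₁ * x₁)) - (-x₂)) := by
      rw [hy]
      simp only [mul_add, add_mul, mul_sub, sub_mul, mul_smul_comm, smul_mul_assoc, mul_assoc]
      match_scalars <;> field_simp <;> ring_nf
    rw [hrel2, sub_self, smul_zero] at key
    exact sub_eq_zero.mp key
  have r3' : ∀ z, y * (x₁ * z) = q • (x₁ * (y * z)) + q • (x₂ * z) := by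
    intro z
    rw [← mul_assoc, r3, add_mul, smul_mul_assoc, smul_mul_assoc, mul_assoc]
  have hneg : ∀ z : RingQuot (so3Rel h), -z = (-1 : ℂ) • z := fun z => (neg_one_smul ℂ z).symm
  -- Cq commutes with the generators
  have c1 : Cq * x₁ = x₁ * Cq := by
    rw [hC]
    simp only [hneg, mul_add, add_mul, mul_sub, sub_mul, smul_mul_assoc,
      mul_smul_comm, smul_add, smul_sub, smul_smul, mul_assoc,
      r1, r1', r2, r2', r3, r3']
    match_scalars <;> field_simp <;> ring_nf
  have c2 : Cq * x₂ = x₂ * Cq := by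
    rw [hC]
    simp only [hneg, mul_add, add_mul, mul_sub, sub_mul, smul_mul_assoc,
      mul_smul_comm, smul_add, smul_sub, smul_smul, mul_assoc,
      r1, r1', r2, r2', r3, r3']
    match_scalars <;> field_simp <;> ring_nf
  -- extend to the whole algebra
  intro a
  obtain ⟨p, rfl⟩ := RingQuot.mkAlgHom_surjective ℂ (so3Rel h) a
  induction p using FreeAlgebra.induction with
  | grade0 c =>
      rw [AlgHom.commutes]
      exact (Algebra.commutes c Cq).symm
  | grade1 i =>
      fin_cases i
      · show Cq * RingQuot.mkAlgHom ℂ (so3Rel h) (FreeAlgebra.ι ℂ 0)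
            = RingQuot.mkAlgHom ℂ (so3Rel h) (FreeAlgebra.ι ℂ 0) * Cq
        rw [← hx₁]; exact c1
      · show Cq * RingQuot.mkAlgHom ℂ (so3Rel h) (FreeAlgebra.ι ℂ 1)
            = RingQuot.mkAlgHom ℂ (so3Rel h) (FreeAlgebra.ι ℂ 1) * Cq
        rw [← hx₂]; exact c2
  | mul p1 p2 ih1 ih2 =>
      rw [map_mul, ← mul_assoc, ih1, mul_assoc, ih2, mul_assoc]
  | add p1 p2 ih1 ih2 =>
      rw [map_add, mul_add, add_mul, ih1, ih2]
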